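/- As k → 1⁻, K(k) - ln(4/√(1-k²)) → 0; that is, the complete elliptic integral of the first kind has the asymptotic K(k) = ln(4/k') + o(1) where k' = √(1-k²). -/

import Mathlib

open Real MeasureTheory Filter Set


open Real MeasureTheory

/-- Incomplete elliptic integral of the first kind `F(φ, k)`. -/
noncomputable def ellF (k φ : ℝ) : ℝ :=
  ∫ s in (0:ℝ)..φ, 1 / Real.sqrt (1 - k ^ 2 * Real.sin s ^ 2)

/-- Complete elliptic integral of the first kind `K(k)`. -/
noncomputable def ellK (k : ℝ) : ℝ := ellF k (π / 2)

/-- Incomplete elliptic integral of the second kind `E(φ, k)`. -/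
noncomputable def ellEinc (k φ : ℝ) : ℝ :=
  ∫ s in (0:ℝ)..φ, Real.sqrt (1 - k ^ 2 * Real.sin s ^ 2)

/-- Complete elliptic integral of the second kind `E(k)`. -/
noncomputable def ellE (k : ℝ) : ℝ := ellEinc k (π / 2)

/-- Jacobi amplitude `am(u, k)`: inverse of `φ ↦ F(φ, k)`. -/
noncomputable def am (k u : ℝ) : ℝ := Function.invFun (ellF k) u

/-- Jacobi elliptic sine `sn(u, k)`. -/
noncomputable def sn (k u : ℝ) : ℝ := Real.sin (am k u)

/-- Jacobi delta amplitude `dn(u, k)`. -/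
noncomputable def dn (k u : ℝ) : ℝ := Real.sqrt (1 - k ^ 2 * sn k u ^ 2)

/-- Jacobi's nome `q = exp (-π K'(k)/K(k))`. -/
noncomputable def nome (k : ℝ) : ℝ :=
  Real.exp (-π * ellK (Real.sqrt (1 - k ^ 2)) / ellK k)



lemma den_pos' {k : ℝ} (h0 : 0 ≤ k) (h1 : k < 1) (s : ℝ) :
    0 < 1 - k ^ 2 * Real.sin s ^ 2 := by
  nlinarith [Real.sin_sq_le_one s, sq_nonneg (Real.sin s), sq_nonneg k]

lemma sqrt_den_pos' {k : ℝ} (h0 : 0 ≤ k) (h1 : k < 1) (s : ℝ) :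
    0 < Real.sqrt (1 - k ^ 2 * Real.sin s ^ 2) :=
  Real.sqrt_pos.2 (den_pos' h0 h1 s)

lemma cont_den {k : ℝ} : Continuous (fun s => Real.sqrt (1 - k ^ 2 * Real.sin s ^ 2)) := by
  apply Real.continuous_sqrt.comp
  continuity

/-- Part A: exact evaluation of the sin-weighted integral. -/
lemma integral_sin_weight {k : ℝ} (h0 : 0 < k) (h1 : k < 1) :
    ∫ s in (0:ℝ)..(π/2), Real.sin s / Real.sqrt (1 - k ^ 2 * Real.sin s ^ 2)
      = (1/k) * Real.log ((1 + k) / Real.sqrt (1 - k ^ 2)) := by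
  have hk2 : (0:ℝ) < 1 - k ^ 2 := by nlinarith
  set c := Real.sqrt (1 - k ^ 2) with hc
  have hcpos : 0 < c := Real.sqrt_pos.2 hk2
  have hc2 : c ^ 2 = 1 - k ^ 2 := Real.sq_sqrt hk2.le
  have key : ∀ s : ℝ, HasDerivAt (fun t => -(1/k) * Real.arsinh (k * Real.cos t / c))
      (Real.sin s / Real.sqrt (1 - k ^ 2 * Real.sin s ^ 2)) s := by
    intro s
    have hin : HasDerivAt (fun t => k * Real.cos t / c) (k * (-Real.sin s) / c) s :=
      ((Real.hasDerivAt_cos s).const_mul k).div_const c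
    have h2 := ((Real.hasDerivAt_arsinh (k * Real.cos s / c)).comp s hin).const_mul (-(1/k))
    refine h2.congr_deriv ?_
    have e1 : 1 - k ^ 2 * Real.sin s ^ 2 = c ^ 2 * (1 + (k * Real.cos s / c) ^ 2) := by
      have := Real.sin_sq_add_cos_sq s
      field_simp
      nlinarith [this]
    rw [e1, Real.sqrt_mul (sq_nonneg c), Real.sqrt_sq hcpos.le]
    field_simp
  rw [intervalIntegral.integral_eq_sub_of_hasDerivAt (fun s _ => key s)
      (by
        apply Continuous.intervalIntegrable
        exact Real.continuous_sin.div cont_den (fun s => (sqrt_den_pos' h0.le h1 s).ne'))]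
  have harc : Real.arsinh (k / c) = Real.log ((1 + k) / c) := by
    rw [Real.arsinh]
    congr 1
    have : 1 + (k / c) ^ 2 = (1 / c) ^ 2 := by
      field_simp
      nlinarith [hc2]
    rw [this, Real.sqrt_sq (by positivity)]
    field_simp
    ring
  simp [Real.cos_pi_div_two, Real.arsinh_zero, harc]


/-- The limiting integral. -/
lemma integral_limit : (∫ s in (0:ℝ)..(π/2), Real.cos s / (1 + Real.sin s)) = Real.log 2 := by
  have hpos : ∀ s ∈ Set.uIcc (0:ℝ) (π/2), (0:ℝ) < 1 + Real.sin s := by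
    intro s hs
    rw [Set.uIcc_of_le (by positivity)] at hs
    have := Real.sin_nonneg_of_nonneg_of_le_pi hs.1 (hs.2.trans (by linarith [Real.pi_pos]))
    linarith
  rw [intervalIntegral.integral_eq_sub_of_hasDerivAt
      (f := fun s => Real.log (1 + Real.sin s))
      (fun s hs => (((Real.hasDerivAt_sin s).const_add 1).log (hpos s hs).ne'))
      (by
        apply ContinuousOn.intervalIntegrable
        exact Real.continuous_cos.continuousOn.div
          (continuous_const.add Real.continuous_sin).continuousOn
          (fun s hs => (hpos s hs).ne'))]
  norm_num

/-- Part B: dominated convergence. -/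
lemma tendsto_R :
    Tendsto (fun k : ℝ =>
        ∫ s in (0:ℝ)..(π/2), (1 - Real.sin s) / Real.sqrt (1 - k ^ 2 * Real.sin s ^ 2))
      (nhdsWithin 1 (Set.Ioo 0 1)) (nhds (Real.log 2)) := by
  rw [← integral_limit]
  apply intervalIntegral.tendsto_integral_filter_of_dominated_convergence (bound := fun _ => (1:ℝ))
  · filter_upwards [self_mem_nhdsWithin] with k hk
    exact ((continuous_const.sub Real.continuous_sin).div cont_den
      (fun s => (sqrt_den_pos' hk.1.le hk.2 s).ne')).aestronglyMeasurable.restrict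
  · filter_upwards [self_mem_nhdsWithin] with k hk
    filter_upwards with x hx
    rw [Set.uIoc_of_le (by positivity)] at hx
    have hsle : Real.sin x ≤ 1 := Real.sin_le_one x
    have hs0 : 0 ≤ Real.sin x :=
      Real.sin_nonneg_of_nonneg_of_le_pi hx.1.le (hx.2.trans (by linarith [Real.pi_pos]))
    have hd := sqrt_den_pos' hk.1.le hk.2 x
    rw [Real.norm_eq_abs, abs_of_nonneg (div_nonneg (by linarith) hd.le), div_le_one hd]
    rw [show (1:ℝ) - Real.sin x = Real.sqrt ((1 - Real.sin x)^2) by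
      rw [Real.sqrt_sq (by linarith)]]
    apply Real.sqrt_le_sqrt
    have hk1 : k ^ 2 ≤ 1 := by nlinarith [hk.1, hk.2]
    have h1 : k ^ 2 * Real.sin x ^ 2 ≤ Real.sin x ^ 2 := by nlinarith [sq_nonneg (Real.sin x)]
    have h2 : Real.sin x ^ 2 ≤ Real.sin x := by nlinarith
    nlinarith [h1, h2]
  · exact intervalIntegrable_const
  · have hae : ∀ᵐ x : ℝ, x ≠ π/2 := by
      rw [ae_iff]
      simp [Real.volume_singleton]
    filter_upwards [hae] with x hne hx
    rw [Set.uIoc_of_le (by positivity)] at hx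
    have hxIoo : x ∈ Set.Ioo (0:ℝ) (π/2) := ⟨hx.1, lt_of_le_of_ne hx.2 hne⟩
    have hcos : 0 < Real.cos x :=
      Real.cos_pos_of_mem_Ioo ⟨by linarith [hxIoo.1, Real.pi_pos], hxIoo.2⟩
    have hden : (0:ℝ) < 1 - 1 ^ 2 * Real.sin x ^ 2 := by
      nlinarith [Real.sin_sq_add_cos_sq x]
    have hca : ContinuousAt (fun k : ℝ => (1 - Real.sin x) / Real.sqrt (1 - k ^ 2 * Real.sin x ^ 2)) 1 := by
      apply ContinuousAt.div continuousAt_const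
      · exact (Real.continuous_sqrt.continuousAt).comp (by fun_prop)
      · exact (Real.sqrt_pos.2 hden).ne'
    have ht := hca.tendsto.mono_left (nhdsWithin_le_nhds (s := Set.Ioo (0:ℝ) 1))
    convert ht using 2
    have h1 : 1 - 1 ^ 2 * Real.sin x ^ 2 = Real.cos x ^ 2 := by
      nlinarith [Real.sin_sq_add_cos_sq x]
    rw [h1, Real.sqrt_sq hcos.le]
    have hs0' : 0 ≤ Real.sin x :=
      Real.sin_nonneg_of_nonneg_of_le_pi hx.1.le (hx.2.trans (by linarith [Real.pi_pos]))
    rw [div_eq_div_iff (ne_of_gt (by linarith)) hcos.ne']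
    nlinarith [Real.sin_sq_add_cos_sq x]


lemma tendstoWithin_of_continuousAt {f : ℝ → ℝ} (h : ContinuousAt f 1) :
    Tendsto f (nhdsWithin 1 (Set.Ioo 0 1)) (nhds (f 1)) :=
  h.tendsto.mono_left nhdsWithin_le_nhds

/-- (1-k) log(1-k) → 0 as k → 1 within Ioo 0 1. -/
lemma xlogx_lim :
    Tendsto (fun k : ℝ => (1 - k) * Real.log (1 - k)) (nhdsWithin 1 (Set.Ioo 0 1)) (nhds 0) := by
  have hmap : Tendsto (fun k : ℝ => 1 - k) (nhdsWithin 1 (Set.Ioo 0 1)) (nhdsWithin 0 (Set.Ioi 0)) := by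
    apply tendsto_nhdsWithin_of_tendsto_nhds_of_eventually_within
    · have h : Tendsto (fun k : ℝ => 1 - k) (nhds 1) (nhds (1 - 1)) :=
        (continuousAt_const.sub continuousAt_id).tendsto
      norm_num at h
      exact h.mono_left nhdsWithin_le_nhds
    · filter_upwards [self_mem_nhdsWithin] with k hk
      simp only [Set.mem_Ioi]
      linarith [hk.2]
  have h := (tendsto_log_mul_rpow_nhdsGT_zero (r := 1) one_pos).comp hmap
  simp only [Real.rpow_one, Function.comp_def] at h
  convert h using 2 with k
  ring

lemma log_four : Real.log 4 = 2 * Real.log 2 := by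
  rw [show (4:ℝ) = 2 ^ 2 by norm_num, Real.log_pow]
  norm_num

/-- Part D: the elementary limit. -/
lemma tendsto_D :
    Tendsto (fun k : ℝ => (1/k) * Real.log ((1 + k) / Real.sqrt (1 - k ^ 2))
        - Real.log (4 / Real.sqrt (1 - k ^ 2)))
      (nhdsWithin 1 (Set.Ioo 0 1)) (nhds (-Real.log 2)) := by
  have t1 : Tendsto (fun k : ℝ => (1/k) * Real.log (1 + k)) (nhdsWithin 1 (Set.Ioo 0 1))
      (nhds (Real.log 2)) := by
    have hca : ContinuousAt (fun k : ℝ => (1/k) * Real.log (1 + k)) 1 :=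
      (continuousAt_const.div continuousAt_id one_ne_zero).mul
        ((Real.continuousAt_log (by norm_num)).comp (by fun_prop))
    have h := tendstoWithin_of_continuousAt hca
    convert h using 2
    norm_num
  have t3 : Tendsto (fun k : ℝ => (1 - 1/k) * ((Real.log (1 - k) + Real.log (1 + k)) / 2))
      (nhdsWithin 1 (Set.Ioo 0 1)) (nhds 0) := by
    have e1 : Tendsto (fun k : ℝ => (1/k) * ((1 - k) * Real.log (1 - k)))
        (nhdsWithin 1 (Set.Ioo 0 1)) (nhds 0) := by
      have hc : Tendsto (fun k : ℝ => 1/k) (nhdsWithin 1 (Set.Ioo 0 1)) (nhds 1) := by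
        have h := tendstoWithin_of_continuousAt
          (continuousAt_const.div continuousAt_id one_ne_zero : ContinuousAt (fun k : ℝ => 1/k) 1)
        convert h using 2
        all_goals norm_num [Pi.div_apply]
      simpa using hc.mul xlogx_lim
    have e2 : Tendsto (fun k : ℝ => (1 - 1/k) * Real.log (1 + k))
        (nhdsWithin 1 (Set.Ioo 0 1)) (nhds 0) := by
      have hc : Tendsto (fun k : ℝ => 1 - 1/k) (nhdsWithin 1 (Set.Ioo 0 1)) (nhds 0) := by
        have h := tendstoWithin_of_continuousAt
          (continuousAt_const.sub (continuousAt_const.div continuousAt_id one_ne_zero) :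
            ContinuousAt (fun k : ℝ => 1 - 1/k) 1)
        convert h using 2
        all_goals norm_num [Pi.sub_apply]
      have hl : Tendsto (fun k : ℝ => Real.log (1 + k)) (nhdsWithin 1 (Set.Ioo 0 1))
          (nhds (Real.log 2)) := by
        have h := tendstoWithin_of_continuousAt
          ((Real.continuousAt_log (by norm_num)).comp (by fun_prop) :
            ContinuousAt (fun k : ℝ => Real.log (1 + k)) 1)
        convert h using 2
        all_goals norm_num [Function.comp_apply]
      simpa using hc.mul hl
    have h := (e1.neg.add e2).div_const 2
    rw [show ((-(0:ℝ)) + 0)/2 = (0:ℝ) by norm_num] at h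
    apply h.congr'
    filter_upwards [self_mem_nhdsWithin] with k hk
    have hk0 : k ≠ 0 := ne_of_gt hk.1
    field_simp
    ring
  have hg := (t1.sub (tendsto_const_nhds (x := Real.log 4))).add t3
  rw [show Real.log 2 - Real.log 4 + 0 = -Real.log 2 by rw [log_four]; ring] at hg
  apply hg.congr'
  filter_upwards [self_mem_nhdsWithin] with k hk
  have h1k : (0:ℝ) < 1 - k := by linarith [hk.2]
  have h1k' : (0:ℝ) < 1 + k := by linarith [hk.1]
  have hk2 : (0:ℝ) < 1 - k ^ 2 := by nlinarith [hk.1, hk.2]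
  have hs : (0:ℝ) < Real.sqrt (1 - k ^ 2) := Real.sqrt_pos.2 hk2
  rw [Real.log_div h1k'.ne' hs.ne', Real.log_div (by norm_num) hs.ne',
      Real.log_sqrt hk2.le, show 1 - k ^ 2 = (1 - k) * (1 + k) by ring,
      Real.log_mul h1k.ne' h1k'.ne']
  ring

theorem stmt_18 :
    Filter.Tendsto (fun k : ℝ => ellK k - Real.log (4 / Real.sqrt (1 - k ^ 2)))
      (nhdsWithin 1 (Set.Ioo 0 1)) (nhds 0) := by
  have hfinal := tendsto_R.add tendsto_D
  rw [show Real.log 2 + -Real.log 2 = (0:ℝ) by ring] at hfinal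
  apply hfinal.congr'
  filter_upwards [self_mem_nhdsWithin] with k hk
  have hne : ∀ s : ℝ, Real.sqrt (1 - k ^ 2 * Real.sin s ^ 2) ≠ 0 :=
    fun s => (sqrt_den_pos' hk.1.le hk.2 s).ne'
  have hint1 : IntervalIntegrable
      (fun s => (1 - Real.sin s) / Real.sqrt (1 - k ^ 2 * Real.sin s ^ 2)) volume 0 (π/2) :=
    ((continuous_const.sub Real.continuous_sin).div cont_den hne).intervalIntegrable _ _
  have hint2 : IntervalIntegrable
      (fun s => Real.sin s / Real.sqrt (1 - k ^ 2 * Real.sin s ^ 2)) volume 0 (π/2) :=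
    (Real.continuous_sin.div cont_den hne).intervalIntegrable _ _
  have hsplit : ellK k
      = (∫ s in (0:ℝ)..(π/2), (1 - Real.sin s) / Real.sqrt (1 - k ^ 2 * Real.sin s ^ 2))
        + ∫ s in (0:ℝ)..(π/2), Real.sin s / Real.sqrt (1 - k ^ 2 * Real.sin s ^ 2) := by
    unfold ellK ellF
    rw [← intervalIntegral.integral_add hint1 hint2]
    congr 1
    funext s
    rw [← add_div, sub_add_cancel]
  rw [hsplit, integral_sin_weight hk.1 hk.2]
  ring
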